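/- The general reason ⊓I·Δ for the decision on instance I in class Δ is equivalent to the weakest NNF Γ whose literals are all implied by I and which satisfies I ⊨ Γ ⊨ Δ. That is: (a) ⊓I·Δ is equivalent to an NNF whose every literal is implied by I and satisfies I ⊨ ⊓I·Δ ⊨ Δ; and (b) any NNF Γ whose literals are implied by I and satisfying I ⊨ Γ ⊨ Δ satisfies Γ ⊨ ⊓I·Δ. -/

import Mathlib

open scoped Classical

/-- Formulas over finite-domain variables: each variable `X : V` has domain `D X`.
A literal of `X` is (intended to be) a nonempty proper subset of `D X`'s states. -/
inductive Form (V : Type) (D : V → Type) : Type where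
  | top : Form V D
  | bot : Form V D
  | lit : (X : V) → Set (D X) → Form V D
  | neg : Form V D → Form V D
  | and : Form V D → Form V D → Form V D
  | or : Form V D → Form V D → Form V D

namespace Form

variable {V : Type} {D : V → Type}

/-- Satisfaction of a formula by a world. -/
def sat (w : ∀ X, D X) : Form V D → Prop
  | top => True
  | bot => False
  | lit X s => w X ∈ s
  | neg φ => ¬ sat w φ
  | and φ ψ => sat w φ ∧ sat w ψ
  | or φ ψ => sat w φ ∨ sat w ψ

/-- Conditioning `Δ|x` of a formula on state `x` of variable `X`: each `X`-literal
`ℓ` is replaced by `⊤` if `x ∈ ℓ` and by `⊥` otherwise. -/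
noncomputable def cond (X : V) (x : D X) : Form V D → Form V D
  | top => top
  | bot => bot
  | lit Y s => if h : X = Y then (if h ▸ x ∈ s then top else bot) else lit Y s
  | neg φ => neg (cond X x φ)
  | and φ ψ => and (cond X x φ) (cond X x ψ)
  | or φ ψ => or (cond X x φ) (cond X x ψ)

/-- The selection operator `⊓x·Δ := (Δ|x) ∧ Δ`. -/
noncomputable def sel (X : V) (x : D X) (Δ : Form V D) : Form V D :=
  and (cond X x Δ) Δ

/-- Logical equivalence of formulas (same models). -/
def equiv (φ ψ : Form V D) : Prop := ∀ w, sat w φ ↔ sat w ψ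

/-- Variable `X` occurs (appears) in the formula. -/
def occurs (X : V) : Form V D → Prop
  | top => False
  | bot => False
  | lit Y _ => Y = X
  | neg φ => occurs X φ
  | and φ ψ => occurs X φ ∨ occurs X ψ
  | or φ ψ => occurs X φ ∨ occurs X ψ

/-- NNF: negation-free, and every literal is a nonempty proper subset of states. -/
def isNNF : Form V D → Prop
  | top => True
  | bot => True
  | lit _ s => s.Nonempty ∧ s ≠ Set.univ
  | neg _ => False
  | and φ ψ => isNNF φ ∧ isNNF ψ
  | or φ ψ => isNNF φ ∧ isNNF ψ

/-- The `X`-literal `s` occurs in the formula. -/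
def litOccurs (X : V) (s : Set (D X)) : Form V D → Prop
  | top => False
  | bot => False
  | lit Y t => ∃ h : Y = X, h ▸ t = s
  | neg φ => litOccurs X s φ
  | and φ ψ => litOccurs X s φ ∨ litOccurs X s ψ
  | or φ ψ => litOccurs X s φ ∨ litOccurs X s ψ

/-- Every literal in the formula is implied by the instance `I`
(i.e., contains `I`'s state of its variable). -/
def litsImp (I : ∀ X, D X) : Form V D → Prop
  | top => True
  | bot => True
  | lit X s => I X ∈ s
  | neg φ => litsImp I φ
  | and φ ψ => litsImp I φ ∧ litsImp I ψ
  | or φ ψ => litsImp I φ ∧ litsImp I ψ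

/-- Iterated selection `⊓` over a list of variables, using states from `v`. -/
noncomputable def selList (v : ∀ X, D X) : List V → Form V D → Form V D
  | [], Δ => Δ
  | X :: L, Δ => sel X (v X) (selList v L Δ)

/-- The general reason `⊓I·Δ`: selection applied for all states of instance `I`. -/
noncomputable def selAll [Fintype V] (I : ∀ X, D X) (Δ : Form V D) : Form V D :=
  selList I (Finset.univ : Finset V).toList Δ

noncomputable def listAnd : List (Form V D) → Form V D
  | [] => top
  | φ :: L => and φ (listAnd L)

/-- Universal literal quantification `∀x·Δ := (Δ|x) ∧ ⋀_{y ≠ x} (x ∨ Δ|y)`. -/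
noncomputable def uq (X : V) [Fintype (D X)] (x : D X) (Δ : Form V D) : Form V D :=
  letI : DecidableEq (D X) := fun _ _ => Classical.propDecidable _
  and (cond X x Δ)
    (listAnd ((((Finset.univ : Finset (D X)).erase x).toList).map
      (fun y => or (lit X ({x} : Set (D X))) (cond X y Δ))))

/-- Iterated universal literal quantification over a list of variables. -/
noncomputable def uqList [∀ X, Fintype (D X)] (v : ∀ X, D X) : List V → Form V D → Form V D
  | [], Δ => Δ
  | X :: L, Δ => uq X (v X) (uqList v L Δ)

/-- The complete reason `∀I·Δ`. -/
noncomputable def uqAll [Fintype V] [∀ X, Fintype (D X)] (I : ∀ X, D X) (Δ : Form V D) :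
    Form V D :=
  uqList I (Finset.univ : Finset V).toList Δ

end Form

/-- A term: a conjunction of literals over distinct variables. Variable `X` is
mentioned iff `lits X ≠ univ`; each literal is nonempty (terms are consistent). -/
structure MvTerm (V : Type) (D : V → Type) : Type where
  lits : ∀ X, Set (D X)
  nonempty : ∀ X, (lits X).Nonempty

/-- A clause: a disjunction of literals over distinct variables. Variable `X` is
mentioned iff `lits X ≠ ∅`; each literal is proper (clauses are never valid). -/
structure MvClause (V : Type) (D : V → Type) : Type where
  lits : ∀ X, Set (D X)
  proper : ∀ X, lits X ≠ Set.univ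

namespace MvTerm

variable {V : Type} {D : V → Type}

def tsat (w : ∀ X, D X) (τ : MvTerm V D) : Prop := ∀ X, w X ∈ τ.lits X

def vars (τ : MvTerm V D) : Set V := {X | τ.lits X ≠ Set.univ}

/-- A simple term assigns a single state to each of its variables. -/
def simple (τ : MvTerm V D) : Prop :=
  ∀ X, τ.lits X ≠ Set.univ → ∃ x, τ.lits X = ({x} : Set (D X))

end MvTerm

namespace MvClause

variable {V : Type} {D : V → Type}

def csat (w : ∀ X, D X) (σ : MvClause V D) : Prop := ∃ X, w X ∈ σ.lits X

def vars (σ : MvClause V D) : Set V := {X | σ.lits X ≠ (∅ : Set (D X))}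

/-- A simple clause: all its literals are single states. -/
def simple (σ : MvClause V D) : Prop :=
  ∀ X, σ.lits X ≠ (∅ : Set (D X)) → ∃ x, σ.lits X = ({x} : Set (D X))

end MvClause

section PrimeDefs

variable {V : Type} {D : V → Type}

def termImp (τ τ' : MvTerm V D) : Prop := ∀ w, τ.tsat w → τ'.tsat w

def clauseImp (σ σ' : MvClause V D) : Prop := ∀ w, σ.csat w → σ'.csat w

/-- A prime implicant of the set of worlds `M`: a ⊨-maximal term implying `M`. -/
def isPrimeImplicantOf (M : (∀ X, D X) → Prop) (τ : MvTerm V D) : Prop :=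
  (∀ w, τ.tsat w → M w) ∧
  ∀ τ' : MvTerm V D, (∀ w, τ'.tsat w → M w) → termImp τ τ' → τ' = τ

/-- A prime implicate of the set of worlds `M`: a ⊨-minimal clause implied by `M`. -/
def isPrimeImplicateOf (M : (∀ X, D X) → Prop) (σ : MvClause V D) : Prop :=
  (∀ w, M w → σ.csat w) ∧
  ∀ σ' : MvClause V D, (∀ w, M w → σ'.csat w) → clauseImp σ' σ → σ' = σ

/-- Remove subsumed terms: delete any term strictly implied by another in the set. -/
def removeSubsumedT (S : Set (MvTerm V D)) : Set (MvTerm V D) :=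
  {τ ∈ S | ¬ ∃ τ' ∈ S, τ' ≠ τ ∧ termImp τ τ'}

/-- Remove subsumed clauses: delete any clause strictly implying another in the set. -/
def removeSubsumedC (S : Set (MvClause V D)) : Set (MvClause V D) :=
  {σ ∈ S | ¬ ∃ σ' ∈ S, σ' ≠ σ ∧ clauseImp σ' σ}

end PrimeDefs

namespace GRAux

open Form

variable {V : Type} {D : V → Type}

noncomputable def upd (w : ∀ X, D X) (X : V) (x : D X) : ∀ Y, D Y :=
  fun Y => if h : X = Y then h ▸ x else w Y

noncomputable def override (w I : ∀ X, D X) (S : Set V) : ∀ X, D X :=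
  fun X => if X ∈ S then I X else w X

theorem override_override (w I : ∀ X, D X) (S T : Set V) :
    override (override w I S) I T = override w I (S ∪ T) := by
  funext X
  by_cases hS : X ∈ S <;> by_cases hT : X ∈ T <;>
    simp [override, hS, hT]

theorem upd_eq (w I : ∀ X, D X) (X : V) :
    upd w X (I X) = override w I ({X} : Set V) := by
  funext Y
  by_cases h : X = Y
  · subst h; simp [upd, override]
  · simp [upd, override, h, Ne.symm h]

theorem override_empty (w I : ∀ X, D X) : override w I (∅ : Set V) = w := by
  funext X; simp [override]

theorem override_self (I : ∀ X, D X) (S : Set V) : override I I S = I := by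
  funext X; by_cases h : X ∈ S <;> simp [override, h]

theorem sat_cond (w : ∀ X, D X) (X : V) (x : D X) (φ : Form V D) :
    sat w (Form.cond X x φ) ↔ sat (upd w X x) φ := by
  induction φ with
  | top => simp [Form.cond, sat]
  | bot => simp [Form.cond, sat]
  | lit Y s =>
    by_cases h : X = Y
    · subst h
      by_cases hx : x ∈ s <;> simp [Form.cond, upd, sat, hx]
    · simp [Form.cond, h, sat, upd]
  | neg φ ih => simp [Form.cond, sat, ih]
  | and φ ψ ih1 ih2 => simp [Form.cond, sat, ih1, ih2]
  | or φ ψ ih1 ih2 => simp [Form.cond, sat, ih1, ih2]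

theorem sat_selList (I : ∀ X, D X) (Δ : Form V D) (L : List V) (w : ∀ X, D X) :
    sat w (selList I L Δ) ↔
      ∀ S : Set V, (∀ X ∈ S, X ∈ L) → sat (override w I S) Δ := by
  induction L generalizing w with
  | nil =>
    constructor
    · intro h S hS
      have : S = ∅ := by
        ext X; simp only [Set.mem_empty_iff_false, iff_false]
        intro hx; simpa using hS X hx
      rw [this, override_empty]; exact h
    · intro h
      have := h ∅ (by simp)
      rwa [override_empty] at this
  | cons Y L ih =>
    simp only [selList, sel, sat, sat_cond, ih]
    constructor
    · rintro ⟨h1, h2⟩ S hS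
      by_cases hY : Y ∈ S
      · have hsub : ∀ X ∈ S \ ({Y} : Set V), X ∈ L := by
          intro X hX
          rcases hX with ⟨hX1, hX2⟩
          have := hS X hX1
          simp only [List.mem_cons] at this
          rcases this with h | h
          · exact absurd h (by simpa using hX2)
          · exact h
        have := h1 (S \ {Y}) hsub
        rw [upd_eq, override_override] at this
        have hset : ({Y} : Set V) ∪ (S \ {Y}) = S :=
          Set.union_diff_cancel (Set.singleton_subset_iff.mpr hY)
        rwa [hset] at this
      · have hsub : ∀ X ∈ S, X ∈ L := by
          intro X hX
          have := hS X hX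
          simp only [List.mem_cons] at this
          rcases this with h | h
          · subst h; exact absurd hX hY
          · exact h
        exact h2 S hsub
    · intro h
      constructor
      · intro S hS
        rw [upd_eq, override_override]
        apply h
        intro X hX
        rcases hX with hX | hX
        · simp only [Set.mem_singleton_iff] at hX; subst hX; simp
        · simp [hS X hX]
      · intro S hS
        exact h S (fun X hX => List.mem_cons_of_mem _ (hS X hX))

theorem sat_selAll [Fintype V] (I : ∀ X, D X) (Δ : Form V D) (w : ∀ X, D X) :
    sat w (selAll I Δ) ↔ ∀ S : Set V, sat (override w I S) Δ := by
  rw [selAll, sat_selList]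
  constructor
  · intro h S; exact h S (fun X _ => by simp [Finset.mem_toList])
  · intro h S _; exact h S

theorem litsImp_mono (I : ∀ X, D X) (φ : Form V D) (hn : isNNF φ)
    (hl : litsImp I φ) (w : ∀ X, D X) (S : Set V) (h : sat w φ) :
    sat (override w I S) φ := by
  induction φ with
  | top => trivial
  | bot => exact h
  | lit X s =>
    simp only [sat, override]
    split
    · exact hl
    · exact h
  | neg φ ih => exact absurd hn (by simp [isNNF])
  | and φ ψ ih1 ih2 =>
    exact ⟨ih1 hn.1 hl.1 h.1, ih2 hn.2 hl.2 h.2⟩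
  | or φ ψ ih1 ih2 =>
    rcases h with h | h
    · exact Or.inl (ih1 hn.1 hl.1 h)
    · exact Or.inr (ih2 hn.2 hl.2 h)

noncomputable def listOr : List (Form V D) → Form V D
  | [] => Form.bot
  | φ :: L => Form.or φ (listOr L)

theorem sat_listAnd (w : ∀ X, D X) (L : List (Form V D)) :
    sat w (listAnd L) ↔ ∀ φ ∈ L, sat w φ := by
  induction L with
  | nil => simp [listAnd, sat]
  | cons φ L ih => simp [listAnd, sat, ih]

theorem sat_listOr (w : ∀ X, D X) (L : List (Form V D)) :
    sat w (listOr L) ↔ ∃ φ ∈ L, sat w φ := by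
  induction L with
  | nil => simp [listOr, sat]
  | cons φ L ih => simp [listOr, sat, ih]

theorem isNNF_listAnd {L : List (Form V D)} (h : ∀ φ ∈ L, isNNF φ) :
    isNNF (listAnd L) := by
  induction L with
  | nil => trivial
  | cons φ L ih => exact ⟨h φ (by simp), ih (fun ψ hψ => h ψ (by simp [hψ]))⟩

theorem isNNF_listOr {L : List (Form V D)} (h : ∀ φ ∈ L, isNNF φ) :
    isNNF (listOr L) := by
  induction L with
  | nil => trivial
  | cons φ L ih => exact ⟨h φ (by simp), ih (fun ψ hψ => h ψ (by simp [hψ]))⟩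

theorem litsImp_listAnd {I : ∀ X, D X} {L : List (Form V D)}
    (h : ∀ φ ∈ L, litsImp I φ) : litsImp I (listAnd L) := by
  induction L with
  | nil => trivial
  | cons φ L ih => exact ⟨h φ (by simp), ih (fun ψ hψ => h ψ (by simp [hψ]))⟩

theorem litsImp_listOr {I : ∀ X, D X} {L : List (Form V D)}
    (h : ∀ φ ∈ L, litsImp I φ) : litsImp I (listOr L) := by
  induction L with
  | nil => trivial
  | cons φ L ih => exact ⟨h φ (by simp), ih (fun ψ hψ => h ψ (by simp [hψ]))⟩

noncomputable def litPair (I w : ∀ X, D X) (X : V) : Form V D :=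
  if ({w X, I X} : Set (D X)) = Set.univ then Form.top
  else Form.lit X ({w X, I X} : Set (D X))

noncomputable def termOf [Fintype V] (I w : ∀ X, D X) : Form V D :=
  listAnd ((Finset.univ : Finset V).toList.map (litPair I w))

theorem sat_termOf [Fintype V] (I w v : ∀ X, D X) :
    sat v (termOf I w) ↔ ∀ X, v X ∈ ({w X, I X} : Set (D X)) := by
  rw [termOf, sat_listAnd]
  constructor
  · intro h X
    have hmem : litPair I w X ∈ (Finset.univ : Finset V).toList.map (litPair I w) :=
      List.mem_map_of_mem (by simp [Finset.mem_toList])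
    have := h _ hmem
    unfold litPair at this
    split at this
    · rename_i hu; rw [hu]; trivial
    · exact this
  · intro h φ hφ
    rcases List.mem_map.mp hφ with ⟨X, _, rfl⟩
    unfold litPair
    split
    · trivial
    · exact h X

theorem isNNF_termOf [Fintype V] (I w : ∀ X, D X) : isNNF (termOf I w) := by
  apply isNNF_listAnd
  intro φ hφ
  rcases List.mem_map.mp hφ with ⟨X, _, rfl⟩
  unfold litPair
  split
  · trivial
  · exact ⟨⟨w X, by simp⟩, by assumption⟩

theorem litsImp_termOf [Fintype V] (I w : ∀ X, D X) : litsImp I (termOf I w) := by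
  apply litsImp_listAnd
  intro φ hφ
  rcases List.mem_map.mp hφ with ⟨X, _, rfl⟩
  unfold litPair
  split
  · trivial
  · exact Set.mem_insert_iff.mpr (Or.inr rfl)

end GRAux


/-- the general reason `⊓I·Δ` is the weakest NNF whose literals are
implied by `I` and that satisfies `I ⊨ Γ ⊨ Δ`: (a) `⊓I·Δ` is equivalent to such
an NNF and satisfies `I ⊨ ⊓I·Δ ⊨ Δ`; (b) any such NNF `Γ` satisfies `Γ ⊨ ⊓I·Δ`. -/
theorem general_reason_weakest_nnf {V : Type} {D : V → Type}
    [Fintype V] [∀ X, Fintype (D X)] (Δ : Form V D) (I : ∀ X, D X)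
    (hI : Form.sat I Δ) :
    (∃ Γ : Form V D, Form.isNNF Γ ∧ Form.litsImp I Γ ∧
        Form.equiv Γ (Form.selAll I Δ)) ∧
    Form.sat I (Form.selAll I Δ) ∧
    (∀ w, Form.sat w (Form.selAll I Δ) → Form.sat w Δ) ∧
    (∀ Γ : Form V D, Form.isNNF Γ → Form.litsImp I Γ →
      Form.sat I Γ → (∀ w, Form.sat w Γ → Form.sat w Δ) →
      ∀ w, Form.sat w Γ → Form.sat w (Form.selAll I Δ)) := by
  classical
  open GRAux Form in
  -- closure of selAll's models under moving toward I
  have hclose : ∀ w, sat w (selAll I Δ) → ∀ S, sat (override w I S) (selAll I Δ) := by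
    intro w hw S
    rw [sat_selAll] at hw ⊢
    intro T
    rw [override_override]
    exact hw _
  have hselI : Form.sat I (Form.selAll I Δ) := by
    rw [sat_selAll]
    intro S
    rw [override_self]
    exact hI
  have hselΔ : ∀ w, Form.sat w (Form.selAll I Δ) → Form.sat w Δ := by
    intro w hw
    have := (sat_selAll I Δ w).mp hw ∅
    rwa [override_empty] at this
  refine ⟨?_, hselI, hselΔ, ?_⟩
  · letI : DecidableEq V := Classical.decEq V
    refine ⟨listOr (((Finset.univ : Finset (∀ X, D X)).toList).map
      (fun w => if Form.sat w (Form.selAll I Δ) then termOf I w else Form.bot)),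
      ?_, ?_, ?_⟩
    · apply isNNF_listOr
      intro φ hφ
      rcases List.mem_map.mp hφ with ⟨w, _, rfl⟩
      split
      · exact isNNF_termOf I w
      · trivial
    · apply litsImp_listOr
      intro φ hφ
      rcases List.mem_map.mp hφ with ⟨w, _, rfl⟩
      split
      · exact litsImp_termOf I w
      · trivial
    · intro v
      rw [sat_listOr]
      constructor
      · rintro ⟨φ, hφ, hv⟩
        rcases List.mem_map.mp hφ with ⟨w, _, rfl⟩
        split at hv
        · rename_i hw
          rw [sat_termOf] at hv
          have hveq : v = override w I {X | v X = I X} := by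
            funext X
            by_cases hX : v X = I X
            · simp [override, hX]
            · have : v X = w X := by
                rcases Set.mem_insert_iff.mp (hv X) with h | h
                · exact h
                · exact absurd h hX
              rw [this]
              simp only [override, Set.mem_setOf_eq, hX, if_false]
          rw [hveq]
          exact hclose w hw _
        · exact absurd hv id
      · intro hv
        refine ⟨if Form.sat v (Form.selAll I Δ) then termOf I v else Form.bot,
          List.mem_map_of_mem (by simp [Finset.mem_toList]), ?_⟩
        rw [if_pos hv, sat_termOf]
        intro X
        exact Set.mem_insert _ _
  · intro Γ hΓnnf hΓimp _ hΓΔ w hw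
    rw [sat_selAll]
    intro S
    exact hΓΔ _ (litsImp_mono I Γ hΓnnf hΓimp w S hw)
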